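/- Let p > 3 and c be distinct primes, let q be a prime satisfying condition (1), and let r be an integer with r² + c·p ≡ 0 (mod q). Let (a,b,a') be a positive definite primitive reduced integral binary quadratic form of discriminant −16·c·p that is SL₂(ℤ)-equivalent to the form (q, 4r, (4r²+4cp)/q), and suppose a > 4. Then the first two successive minima of O_c(q,r) are a and a': every γ ∈ O_c(q,r) not lying in ℚ·1 satisfies 4·Nrd(γ) − Trd(γ)² ≥ a; there exists γ₁ ∈ O_c(q,r) with 4·Nrd(γ₁) − Trd(γ₁)² = a; and for such a γ₁, every γ ∈ O_c(q,r) with 1, γ₁, γ linearly independent over ℚ satisfies 4·Nrd(γ) − Trd(γ)² ≥ a', with equality attained by some such γ. -/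

import Mathlib

open Quaternion

/-- Condition (1) on the prime `q`. -/
def SatisfiesCond1 (p c q : ℕ) (hq : q.Prime) : Prop :=
  (Odd c ∧ q % 8 = 3 ∧ @legendreSym q ⟨hq⟩ (p : ℤ) = -1 ∧ @legendreSym q ⟨hq⟩ (c : ℤ) = 1) ∨
  (c = 2 ∧ q % 8 = 7 ∧ @legendreSym q ⟨hq⟩ (p : ℤ) = -1)

/-- The reduced trace `Trd x = x + star x`, as a rational number. -/
def Trd {a b : ℚ} (x : ℍ[ℚ, a, b]) : ℚ := (x + star x).re

/-- The reduced norm `Nrd x = x · star x`, as a rational number. -/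
def Nrd {a b : ℚ} (x : ℍ[ℚ, a, b]) : ℚ := (x * star x).re

/-- The ℤ-submodule `O_c(q,r)` of `ℍ[ℚ, −cp, −q]` spanned by
`1, (1+j)/2, (i+i·j)/2, (r·j+i·j)/q`. -/
noncomputable def Ocqr (p c q : ℕ) (r : ℤ) :
    Submodule ℤ ℍ[ℚ, -((c : ℚ) * (p : ℚ)), -(q : ℚ)] :=
  Submodule.span ℤ
    {1,
     (2 : ℚ)⁻¹ • (1 + (⟨0, 0, 1, 0⟩ : ℍ[ℚ, -((c : ℚ) * (p : ℚ)), -(q : ℚ)])),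
     (2 : ℚ)⁻¹ • ((⟨0, 1, 0, 0⟩ : ℍ[ℚ, -((c : ℚ) * (p : ℚ)), -(q : ℚ)]) +
       (⟨0, 1, 0, 0⟩ : ℍ[ℚ, -((c : ℚ) * (p : ℚ)), -(q : ℚ)]) * ⟨0, 0, 1, 0⟩),
     (q : ℚ)⁻¹ • ((r : ℚ) • (⟨0, 0, 1, 0⟩ : ℍ[ℚ, -((c : ℚ) * (p : ℚ)), -(q : ℚ)]) +
       (⟨0, 1, 0, 0⟩ : ℍ[ℚ, -((c : ℚ) * (p : ℚ)), -(q : ℚ)]) * ⟨0, 0, 1, 0⟩)}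

/-- `(a,b,a')` is a positive definite primitive reduced integral binary quadratic form. -/
def IsPosDefPrimitiveReduced (a b a' : ℤ) : Prop :=
  0 < a ∧ -a < b ∧ b ≤ a ∧ a ≤ a' ∧ Int.gcd a (Int.gcd b a') = 1 ∧ (a = a' → 0 ≤ b)

/-- The forms `(a₁,b₁,a₁')` and `(a₂,b₂,a₂')` are `SL₂(ℤ)`-equivalent. -/
def FormEquiv (a₁ b₁ a₁' a₂ b₂ a₂' : ℤ) : Prop :=
  ∃ m₁₁ m₁₂ m₂₁ m₂₂ : ℤ, m₁₁ * m₂₂ - m₁₂ * m₂₁ = 1 ∧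
    ∀ X Y : ℤ, a₁ * X ^ 2 + b₁ * X * Y + a₁' * Y ^ 2 =
      a₂ * (m₁₁ * X + m₁₂ * Y) ^ 2 + b₂ * (m₁₁ * X + m₁₂ * Y) * (m₂₁ * X + m₂₂ * Y) +
        a₂' * (m₂₁ * X + m₂₂ * Y) ^ 2

/- ### Auxiliary lemmas -/

lemma one_le_sq' {s : ℤ} (hs : s ≠ 0) : 1 ≤ s ^ 2 := by
  rcases lt_or_gt_of_ne hs with h | h <;> nlinarith

def fval (a b a' s t : ℤ) : ℤ := a*s^2 + b*s*t + a'*t^2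

def Qint (cp qz rr c' x y z : ℤ) : ℤ :=
  4*cp*y^2 + (qz*(2*(x-y*rr))^2 + 4*rr*(2*(x-y*rr))*(qz*y+2*z) + c'*(qz*y+2*z)^2)

lemma redf_min2 (a b a' s t : ℤ) (ha : 0 < a) (hb1 : -a < b) (hb2 : b ≤ a)
    (haa' : a ≤ a') (ht : t ≠ 0) : a' ≤ fval a b a' s t := by
  simp only [fval]
  have ht2 : 1 ≤ t^2 := one_le_sq' ht
  have hbb : b^2 ≤ a*a' := by nlinarith
  rcases eq_or_lt_of_le ht2 with h1 | h4
  · have ht' : t = 1 ∨ t = -1 := by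
      rcases lt_or_gt_of_ne ht with h | h
      · right; nlinarith
      · left; nlinarith
    rcases eq_or_ne s 0 with rfl | hs
    · rcases ht' with rfl | rfl <;> nlinarith
    · have hs2 : 1 ≤ s^2 := one_le_sq' hs
      have key : 0 ≤ a*s^2 + b*s*t := by
        rcases ht' with rfl | rfl <;> rcases lt_or_gt_of_ne hs with h | h
        · have : 0 ≤ (-s) * (-(a*s+b)) := mul_nonneg (by linarith) (by nlinarith)
          nlinarith
        · have : 0 ≤ s * (a*s+b) := mul_nonneg (by linarith) (by nlinarith)
          nlinarith
        · have : 0 ≤ (-s) * (-(a*s-b)) := mul_nonneg (by linarith) (by nlinarith)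
          nlinarith
        · have : 0 ≤ s * (a*s-b) := mul_nonneg (by linarith) (by nlinarith)
          nlinarith
      rcases ht' with rfl | rfl <;> nlinarith
  · have h4' : 4 ≤ t^2 := by
      rcases lt_or_gt_of_ne ht with h | h
      · have h2 : t ≤ -2 := by
          by_contra hcon
          have : t = -1 := by omega
          subst this; norm_num at h4
        nlinarith
      · have h2 : 2 ≤ t := by
          by_contra hcon
          have : t = 1 := by omega
          subst this; norm_num at h4
        nlinarith
    nlinarith [sq_nonneg (2*a*s + b*t),
      mul_le_mul_of_nonneg_left h4' (show (0:ℤ) ≤ 4*a*a' - b^2 by nlinarith)]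

lemma redf_min (a b a' s t : ℤ) (ha : 0 < a) (hb1 : -a < b) (hb2 : b ≤ a)
    (haa' : a ≤ a') (hst : ¬(s = 0 ∧ t = 0)) : a ≤ fval a b a' s t := by
  rcases eq_or_ne t 0 with rfl | ht
  · have hs : s ≠ 0 := fun h => hst ⟨h, rfl⟩
    have := one_le_sq' hs
    simp only [fval]
    nlinarith
  · have := redf_min2 a b a' s t ha hb1 hb2 haa' ht
    linarith

lemma Btransfer (a b a' qz rr c' m11 m12 m21 m22 : ℤ)
    (hdet : m11*m22 - m12*m21 = 1)
    (hM : ∀ X Y : ℤ, a * X ^ 2 + b * X * Y + a' * Y ^ 2 =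
      qz * (m11 * X + m12 * Y) ^ 2 + rr * (m11 * X + m12 * Y) * (m21 * X + m22 * Y) +
        c' * (m21 * X + m22 * Y) ^ 2)
    (X Z : ℤ) :
    qz*X^2 + rr*X*Z + c'*Z^2 = fval a b a' (m22*X - m12*Z) (-(m21*X) + m11*Z) := by
  have h := hM (m22*X - m12*Z) (-(m21*X) + m11*Z)
  have e1 : m11*(m22*X - m12*Z) + m12*(-(m21*X) + m11*Z) = X := by linear_combination X * hdet
  have e2 : m21*(m22*X - m12*Z) + m22*(-(m21*X) + m11*Z) = Z := by linear_combination Z * hdet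
  rw [e1, e2] at h
  simp only [fval]
  linarith [h]

lemma mtx_zero (m11 m12 m21 m22 X Z : ℤ) (hdet : m11*m22 - m12*m21 = 1)
    (hs : m22*X - m12*Z = 0) (ht : -(m21*X) + m11*Z = 0) : X = 0 ∧ Z = 0 := by
  constructor
  · have : X = m11*(m22*X - m12*Z) + m12*(-(m21*X) + m11*Z) := by linear_combination -X * hdet
    rw [hs, ht] at this; simpa using this
  · have : Z = m21*(m22*X - m12*Z) + m22*(-(m21*X) + m11*Z) := by linear_combination -Z * hdet
    rw [hs, ht] at this; simpa using this

lemma Qint_y0 (a b a' qz rr c' m11 m12 m21 m22 cp x z : ℤ)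
    (hBf : ∀ X Z : ℤ, qz*X^2 + 4*rr*X*Z + c'*Z^2
        = fval a b a' (m22*X - m12*Z) (-(m21*X) + m11*Z)) :
    Qint cp qz rr c' x 0 z
      = 4 * fval a b a' (m22*x - m12*z) (-(m21*x) + m11*z) := by
  have h := hBf (2*x) (2*z)
  simp only [fval] at h ⊢
  simp only [Qint]
  linear_combination h

lemma Qint_ylt (a b a' qz rr c' cp m11 m12 m21 m22 : ℤ)
    (ha : 0 < a) (hb1 : -a < b) (hb2 : b ≤ a) (haa' : a ≤ a')
    (hdisc : b^2 - 4*a*a' = -(16*cp))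
    (ha4 : 4 < a) (hcp : 0 < cp) (hqodd : qz % 2 = 1)
    (hdet : m11*m22 - m12*m21 = 1)
    (hBf : ∀ X Z : ℤ, qz*X^2 + 4*rr*X*Z + c'*Z^2
        = fval a b a' (m22*X - m12*Z) (-(m21*X) + m11*Z))
    (x y z : ℤ) (hy : y ≠ 0) : 4*a' < Qint cp qz rr c' x y z := by
  have hbsq : b^2 ≤ a^2 := by nlinarith
  have h3aa : 3*(a*a') ≤ 16*cp := by nlinarith
  have ha'cp : 4*a' < a + 4*cp := by
    have h1 : a*(4*a') < a*(a + 4*cp) := by nlinarith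
    exact lt_of_mul_lt_mul_left h1 ha.le
  have hy2 : 1 ≤ y^2 := one_le_sq' hy
  by_cases hXZ : 2*(x - y*rr) = 0 ∧ qz*y + 2*z = 0
  · obtain ⟨hX, hZ⟩ := hXZ
    have hyeven : Even y := by
      have h2 : Even (qz * y) := ⟨-z, by linarith⟩
      rcases Int.even_mul.mp h2 with h | h
      · exfalso; rcases h with ⟨m, hm⟩; omega
      · exact h
    obtain ⟨k, hk⟩ := hyeven
    have hk0 : k ≠ 0 := by rintro rfl; simp at hk; exact hy hk
    have hk2 : 1 ≤ k^2 := one_le_sq' hk0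
    have hQ : Qint cp qz rr c' x y z = 4*cp*y^2 := by
      simp only [Qint]; rw [hX, hZ]; ring
    rw [hQ, hk]
    have hk4 : (k+k)^2 = 4*k^2 := by ring
    rw [hk4]
    have h5a : 5 ≤ a := by omega
    nlinarith
  · have h := hBf (2*(x-y*rr)) (qz*y+2*z)
    have hst : ¬(m22*(2*(x-y*rr)) - m12*(qz*y+2*z) = 0 ∧
        -(m21*(2*(x-y*rr))) + m11*(qz*y+2*z) = 0) := by
      rintro ⟨hs, ht⟩
      exact hXZ (mtx_zero m11 m12 m21 m22 _ _ hdet hs ht)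
    have hf := redf_min a b a' _ _ ha hb1 hb2 haa' hst
    have hQ : Qint cp qz rr c' x y z = 4*cp*y^2 +
        fval a b a' (m22*(2*(x-y*rr)) - m12*(qz*y+2*z))
          (-(m21*(2*(x-y*rr))) + m11*(qz*y+2*z)) := by
      simp only [Qint]; rw [h]
    rw [hQ]
    nlinarith

lemma Trd_eq {a b : ℚ} (x : ℍ[ℚ, a, b]) : Trd x = 2 * x.re := by
  simp [Trd]; ring

lemma Nrd_eq {a b : ℚ} (x : ℍ[ℚ, a, b]) :
    Nrd x = x.re^2 - a*x.imI^2 - b*x.imJ^2 + a*b*x.imK^2 := by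
  simp [Nrd, QuaternionAlgebra.re_mul]; ring

lemma ocqr_coords (p c q : ℕ) (r : ℤ)
    {γ : ℍ[ℚ, -((c : ℚ) * (p : ℚ)), -(q : ℚ)]} (hγ : γ ∈ Ocqr p c q r) :
    ∃ w x y z : ℤ, γ.re = w + x/2 ∧ γ.imI = y/2 ∧ γ.imJ = x/2 + z*r/q ∧ γ.imK = y/2 + z/q := by
  induction hγ using Submodule.span_induction with
  | mem u hu =>
    simp only [Set.mem_insert_iff, Set.mem_singleton_iff] at hu
    rcases hu with rfl | rfl | rfl | rfl
    · exact ⟨1, 0, 0, 0, by norm_num, by norm_num, by norm_num, by norm_num⟩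
    · refine ⟨0, 1, 0, 0, ?_, ?_, ?_, ?_⟩ <;>
        simp [QuaternionAlgebra.re_smul, QuaternionAlgebra.imI_smul,
          QuaternionAlgebra.imJ_smul, QuaternionAlgebra.imK_smul, smul_eq_mul]
    · refine ⟨0, 0, 1, 0, ?_, ?_, ?_, ?_⟩ <;>
        simp [QuaternionAlgebra.re_smul, QuaternionAlgebra.imI_smul,
          QuaternionAlgebra.imJ_smul, QuaternionAlgebra.imK_smul,
          QuaternionAlgebra.re_mul, QuaternionAlgebra.imI_mul,
          QuaternionAlgebra.imJ_mul, QuaternionAlgebra.imK_mul, smul_eq_mul]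
    · refine ⟨0, 0, 0, 1, ?_, ?_, ?_, ?_⟩ <;>
        simp [QuaternionAlgebra.re_smul, QuaternionAlgebra.imI_smul,
          QuaternionAlgebra.imJ_smul, QuaternionAlgebra.imK_smul,
          QuaternionAlgebra.re_mul, QuaternionAlgebra.imI_mul,
          QuaternionAlgebra.imJ_mul, QuaternionAlgebra.imK_mul, smul_eq_mul] <;>
        field_simp
  | zero => exact ⟨0, 0, 0, 0, by norm_num, by norm_num, by norm_num, by norm_num⟩
  | add u v hu hv ihu ihv =>
    obtain ⟨w1, x1, y1, z1, h1, h2, h3, h4⟩ := ihu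
    obtain ⟨w2, x2, y2, z2, g1, g2, g3, g4⟩ := ihv
    refine ⟨w1 + w2, x1 + x2, y1 + y2, z1 + z2, ?_, ?_, ?_, ?_⟩ <;>
      simp [QuaternionAlgebra.re_add, QuaternionAlgebra.imI_add,
        QuaternionAlgebra.imJ_add, QuaternionAlgebra.imK_add, h1, h2, h3, h4,
        g1, g2, g3, g4] <;> push_cast <;> ring
  | smul n u hu ihu =>
    obtain ⟨w1, x1, y1, z1, h1, h2, h3, h4⟩ := ihu
    refine ⟨n * w1, n * x1, n * y1, n * z1, ?_, ?_, ?_, ?_⟩ <;>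
      simp [QuaternionAlgebra.re_smul, QuaternionAlgebra.imI_smul,
        QuaternionAlgebra.imJ_smul, QuaternionAlgebra.imK_smul, h1, h2, h3, h4,
        zsmul_eq_mul] <;> push_cast <;> ring

lemma ocqr_mem (p c q : ℕ) (r : ℤ) (hq : (q:ℚ) ≠ 0) (w x y z : ℤ) :
    (⟨(w:ℚ) + x/2, y/2, (x:ℚ)/2 + z*r/q, (y:ℚ)/2 + z/q⟩ :
      ℍ[ℚ, -((c : ℚ) * (p : ℚ)), -(q : ℚ)]) ∈ Ocqr p c q r := by
  have key : (⟨(w:ℚ) + x/2, y/2, (x:ℚ)/2 + z*r/q, (y:ℚ)/2 + z/q⟩ :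
      ℍ[ℚ, -((c : ℚ) * (p : ℚ)), -(q : ℚ)]) =
      w • (1 : ℍ[ℚ, -((c : ℚ) * (p : ℚ)), -(q : ℚ)]) +
      x • ((2 : ℚ)⁻¹ • (1 + (⟨0, 0, 1, 0⟩ : ℍ[ℚ, -((c : ℚ) * (p : ℚ)), -(q : ℚ)]))) +
      y • ((2 : ℚ)⁻¹ • ((⟨0, 1, 0, 0⟩ : ℍ[ℚ, -((c : ℚ) * (p : ℚ)), -(q : ℚ)]) +
       (⟨0, 1, 0, 0⟩ : ℍ[ℚ, -((c : ℚ) * (p : ℚ)), -(q : ℚ)]) * ⟨0, 0, 1, 0⟩)) +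
      z • ((q : ℚ)⁻¹ • ((r : ℚ) • (⟨0, 0, 1, 0⟩ : ℍ[ℚ, -((c : ℚ) * (p : ℚ)), -(q : ℚ)]) +
       (⟨0, 1, 0, 0⟩ : ℍ[ℚ, -((c : ℚ) * (p : ℚ)), -(q : ℚ)]) * ⟨0, 0, 1, 0⟩)) := by
    ext <;>
      simp [QuaternionAlgebra.re_smul, QuaternionAlgebra.imI_smul,
        QuaternionAlgebra.imJ_smul, QuaternionAlgebra.imK_smul,
        QuaternionAlgebra.re_add, QuaternionAlgebra.imI_add,
        QuaternionAlgebra.imJ_add, QuaternionAlgebra.imK_add,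
        QuaternionAlgebra.re_mul, QuaternionAlgebra.imI_mul,
        QuaternionAlgebra.imJ_mul, QuaternionAlgebra.imK_mul,
        zsmul_eq_mul, smul_eq_mul] <;>
      field_simp
  rw [key]
  refine Submodule.add_mem _ (Submodule.add_mem _ (Submodule.add_mem _ ?_ ?_) ?_) ?_ <;>
    refine Submodule.smul_mem _ _ (Submodule.subset_span ?_)
  · exact Set.mem_insert _ _
  · exact Set.mem_insert_of_mem _ (Set.mem_insert _ _)
  · exact Set.mem_insert_of_mem _ (Set.mem_insert_of_mem _ (Set.mem_insert _ _))
  · exact Set.mem_insert_of_mem _ (Set.mem_insert_of_mem _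
      (Set.mem_insert_of_mem _ rfl))

lemma value_formula (c p q : ℕ) (r c' : ℤ) (hq : (q:ℚ) ≠ 0)
    (hc' : (q:ℤ) * c' = 4*r^2 + 4*(c:ℤ)*p)
    (γ : ℍ[ℚ, -((c : ℚ) * (p : ℚ)), -(q : ℚ)]) (w x y z : ℤ)
    (h1 : γ.re = w + x/2) (h2 : γ.imI = y/2) (h3 : γ.imJ = x/2 + z*r/q)
    (h4 : γ.imK = y/2 + z/q) :
    4*(4 * Nrd γ - Trd γ^2) = ((Qint ((c:ℤ)*p) q r c' x y z : ℤ) : ℚ) := by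
  rw [Nrd_eq, Trd_eq, h1, h2, h3, h4]
  have hc'' : (q:ℚ) * (c':ℚ) = 4*(r:ℚ)^2 + 4*c*p := by exact_mod_cast hc'
  simp only [Qint]
  push_cast
  field_simp
  rw [show (c':ℚ) = (4*(r:ℚ)^2 + 4*c*p)/q by field_simp; linarith]
  field_simp
  ring

lemma indep_of_cross (c p q : ℕ) (hq0 : (q:ℚ) ≠ 0) (r : ℤ)
    (γ₁ γ : ℍ[ℚ, -((c : ℚ) * (p : ℚ)), -(q : ℚ)])
    (x₁ z₁ x z : ℤ)
    (h3 : γ₁.imJ = x₁/2 + z₁*r/q) (h4 : γ₁.imK = z₁/q)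
    (g3 : γ.imJ = (x:ℚ)/2 + z*r/q) (g4 : γ.imK = (z:ℚ)/q)
    (hcross : x₁ * z - x * z₁ ≠ 0) : LinearIndependent ℚ ![1, γ₁, γ] := by
  rw [Fintype.linearIndependent_iff]
  intro g hg
  have hsum : g 0 • (1 : ℍ[ℚ, -((c : ℚ) * (p : ℚ)), -(q : ℚ)]) + g 1 • γ₁ + g 2 • γ = 0 := by
    simpa [Fin.sum_univ_three] using hg
  have hre : g 0 + g 1 * γ₁.re + g 2 * γ.re = 0 := by
    have := congrArg QuaternionAlgebra.re hsum
    simpa [QuaternionAlgebra.re_smul, smul_eq_mul] using this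
  have hJ : g 1 * γ₁.imJ + g 2 * γ.imJ = 0 := by
    have := congrArg QuaternionAlgebra.imJ hsum
    simpa [QuaternionAlgebra.imJ_smul, smul_eq_mul] using this
  have hK : g 1 * γ₁.imK + g 2 * γ.imK = 0 := by
    have := congrArg QuaternionAlgebra.imK hsum
    simpa [QuaternionAlgebra.imK_smul, smul_eq_mul] using this
  rw [h4, g4] at hK
  rw [h3, g3] at hJ
  have hKq : g 1 * (z₁:ℚ) + g 2 * (z:ℚ) = 0 := by
    have e : g 1 * (z₁:ℚ) + g 2 * (z:ℚ) =
        (q:ℚ) * (g 1 * ((z₁:ℚ)/q) + g 2 * ((z:ℚ)/q)) := by field_simp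
    rw [e, hK, mul_zero]
  have hJq : g 1 * (x₁:ℚ) + g 2 * (x:ℚ) = 0 := by
    have e : g 1 * (x₁:ℚ) + g 2 * (x:ℚ) =
        2*(g 1 * ((x₁:ℚ)/2 + z₁*r/q) + g 2 * ((x:ℚ)/2 + z*r/q))
          - (2*(r:ℚ)/q)*(g 1 * (z₁:ℚ) + g 2 * (z:ℚ)) := by field_simp; ring
    rw [e, hJ, hKq]; ring
  have hcQ : ((x₁:ℚ) * z - x * z₁) ≠ 0 := by
    exact_mod_cast hcross
  have hg1 : g 1 = 0 := by
    have e : g 1 * ((x₁:ℚ) * z - x * z₁) =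
        (z:ℚ) * (g 1 * x₁ + g 2 * x) - (x:ℚ) * (g 1 * z₁ + g 2 * z) := by ring
    rw [hJq, hKq] at e
    rcases (by simpa using e : g 1 = 0 ∨ ((x₁:ℚ) * z - x * z₁) = 0) with h | h
    · exact h
    · exact absurd h hcQ
  have hg2 : g 2 = 0 := by
    have e : g 2 * ((x₁:ℚ) * z - x * z₁) =
        (x₁:ℚ) * (g 1 * z₁ + g 2 * z) - (z₁:ℚ) * (g 1 * x₁ + g 2 * x) := by ring
    rw [hJq, hKq] at e
    rcases (by simpa using e : g 2 = 0 ∨ ((x₁:ℚ) * z - x * z₁) = 0) with h | h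
    · exact h
    · exact absurd h hcQ
  have hg0 : g 0 = 0 := by
    rw [hg1, hg2] at hre; simpa using hre
  intro i
  fin_cases i <;> assumption

lemma not_indep_of_cross_eq (c p q : ℕ) (hq0 : (q:ℚ) ≠ 0) (r : ℤ)
    (γ₁ γ : ℍ[ℚ, -((c : ℚ) * (p : ℚ)), -(q : ℚ)])
    (x₁ z₁ x z : ℤ)
    (h2 : γ₁.imI = 0) (h3 : γ₁.imJ = x₁/2 + z₁*r/q) (h4 : γ₁.imK = z₁/q)
    (g2 : γ.imI = 0) (g3 : γ.imJ = (x:ℚ)/2 + z*r/q) (g4 : γ.imK = (z:ℚ)/q)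
    (hx₁z₁ : ¬(x₁ = 0 ∧ z₁ = 0))
    (hcross : x₁ * z - x * z₁ = 0) : ¬ LinearIndependent ℚ ![1, γ₁, γ] := by
  intro hli
  obtain ⟨l, hx, hz⟩ : ∃ l : ℚ, (x:ℚ) = l * x₁ ∧ (z:ℚ) = l * z₁ := by
    have hc : (x₁:ℚ) * z = (x:ℚ) * z₁ := by exact_mod_cast sub_eq_zero.mp hcross
    by_cases hx1 : x₁ = 0
    · have hz1 : z₁ ≠ 0 := fun h => hx₁z₁ ⟨hx1, h⟩
      have hz1' : (z₁:ℚ) ≠ 0 := Int.cast_ne_zero.mpr hz1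
      refine ⟨(z:ℚ)/z₁, ?_, by field_simp⟩
      have : (x:ℚ) * z₁ = 0 := by rw [← hc, hx1]; push_cast; ring
      rcases mul_eq_zero.mp this with h | h
      · rw [h, hx1]; push_cast; ring
      · exact absurd h hz1'
    · have hx1' : (x₁:ℚ) ≠ 0 := Int.cast_ne_zero.mpr hx1
      refine ⟨(x:ℚ)/x₁, by field_simp, ?_⟩
      field_simp
      linarith [hc]
  have := Fintype.linearIndependent_iff.mp hli
    ![-(γ.re - l * γ₁.re), -l, 1] ?_ 2
  · simp [Matrix.cons_val] at this
  · rw [Fin.sum_univ_three]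
    simp only [Matrix.cons_val_zero, Matrix.cons_val_one, Matrix.head_cons,
      Matrix.cons_val_two, Matrix.tail_cons]
    ext
    · simp [QuaternionAlgebra.re_smul, smul_eq_mul]; ring
    · simp [QuaternionAlgebra.imI_smul, smul_eq_mul, h2, g2]
    · simp [QuaternionAlgebra.imJ_smul, smul_eq_mul, h3, g3, hx, hz]
      field_simp; ring
    · simp [QuaternionAlgebra.imK_smul, smul_eq_mul, h4, g4, hx, hz]
      field_simp
      ring


/-- If the reduced form `(a,b,a')` equivalent to `(q, 4r, (4r²+4cp)/q)` has `a > 4`, then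
`a` and `a'` are the first two successive minima of `O_c(q,r)`. -/
theorem Ocqr_successive_minima (p c q : ℕ) (hp : p.Prime) (hp3 : 3 < p) (hc : c.Prime)
    (hpc : p ≠ c) (hq : q.Prime) (hcond : SatisfiesCond1 p c q hq)
    (r : ℤ) (hr : (q : ℤ) ∣ r ^ 2 + (c : ℤ) * (p : ℤ))
    (a b a' : ℤ) (hform : IsPosDefPrimitiveReduced a b a')
    (hdisc : b ^ 2 - 4 * a * a' = -(16 * (c : ℤ) * (p : ℤ)))
    (hequiv : FormEquiv a b a' (q : ℤ) (4 * r) ((4 * r ^ 2 + 4 * (c : ℤ) * (p : ℤ)) / q))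
    (ha4 : 4 < a) :
    (∀ γ ∈ Ocqr p c q r,
      γ ∉ Submodule.span ℚ ({1} : Set ℍ[ℚ, -((c : ℚ) * (p : ℚ)), -(q : ℚ)]) →
      (a : ℚ) ≤ 4 * Nrd γ - Trd γ ^ 2) ∧
    (∃ γ₁ ∈ Ocqr p c q r, 4 * Nrd γ₁ - Trd γ₁ ^ 2 = (a : ℚ)) ∧
    (∀ γ₁ ∈ Ocqr p c q r, 4 * Nrd γ₁ - Trd γ₁ ^ 2 = (a : ℚ) →
      (∀ γ ∈ Ocqr p c q r, LinearIndependent ℚ ![1, γ₁, γ] →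
        (a' : ℚ) ≤ 4 * Nrd γ - Trd γ ^ 2) ∧
      (∃ γ ∈ Ocqr p c q r, LinearIndependent ℚ ![1, γ₁, γ] ∧
        4 * Nrd γ - Trd γ ^ 2 = (a' : ℚ))) := by
  obtain ⟨ha, hb1, hb2, haa', hgcd, hred⟩ := hform
  obtain ⟨m11, m12, m21, m22, hdet, hM⟩ := hequiv
  have hq0 : (q:ℚ) ≠ 0 := Nat.cast_ne_zero.mpr hq.pos.ne'
  have hqoddN : q % 2 = 1 := by
    rcases hcond with ⟨_, h8, _⟩ | ⟨_, h8, _⟩ <;> omega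
  have hqodd : (q:ℤ) % 2 = 1 := by omega
  have hcp : (0:ℤ) < (c:ℤ) * p := by
    have h1 : 0 < (c:ℤ) := by exact_mod_cast hc.pos
    have h2 : 0 < (p:ℤ) := by exact_mod_cast hp.pos
    positivity
  have hdvd : (q:ℤ) ∣ 4 * r ^ 2 + 4 * (c:ℤ) * p := by
    obtain ⟨k, hk⟩ := hr
    exact ⟨4*k, by linarith⟩
  have hqc' : (q:ℤ) * ((4 * r ^ 2 + 4 * (c:ℤ) * (p:ℤ)) / q) = 4*r^2 + 4*(c:ℤ)*p :=
    Int.mul_ediv_cancel' hdvd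
  have hBf : ∀ X Z : ℤ, (q:ℤ)*X^2 + 4*r*X*Z + ((4 * r ^ 2 + 4 * (c:ℤ) * (p:ℤ)) / q)*Z^2
      = fval a b a' (m22*X - m12*Z) (-(m21*X) + m11*Z) :=
    Btransfer a b a' q (4*r) _ m11 m12 m21 m22 hdet hM
  have hdisc' : b^2 - 4*a*a' = -(16*((c:ℤ)*p)) := by linear_combination hdisc
  have conv_le : ∀ (γ : ℍ[ℚ, -((c : ℚ) * (p : ℚ)), -(q : ℚ)]) (n m : ℤ),
      4*(4*Nrd γ - Trd γ^2) = ((m:ℤ):ℚ) → 4*n ≤ m → (n:ℚ) ≤ 4*Nrd γ - Trd γ^2 := by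
    intro γ n m h hle
    have h2 : ((4*n:ℤ):ℚ) ≤ (m:ℚ) := Int.cast_le.mpr hle
    rw [← h] at h2
    push_cast at h2
    linarith
  have conv_eq : ∀ (γ : ℍ[ℚ, -((c : ℚ) * (p : ℚ)), -(q : ℚ)]) (n m : ℤ),
      4*(4*Nrd γ - Trd γ^2) = ((m:ℤ):ℚ) → m = 4*n → 4*Nrd γ - Trd γ^2 = (n:ℚ) := by
    intro γ n m h heq
    rw [heq] at h
    push_cast at h
    linarith
  refine ⟨?_, ?_, ?_⟩
  · -- Part 1: first minimum lower bound
    intro γ hγ hns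
    obtain ⟨w, x, y, z, e1, e2, e3, e4⟩ := ocqr_coords p c q r hγ
    have hv := value_formula c p q r _ hq0 hqc' γ w x y z e1 e2 e3 e4
    have hnz : ¬(x = 0 ∧ y = 0 ∧ z = 0) := by
      rintro ⟨rfl, rfl, rfl⟩
      apply hns
      rw [Submodule.mem_span_singleton]
      refine ⟨γ.re, ?_⟩
      ext <;> simp [QuaternionAlgebra.re_smul, QuaternionAlgebra.imI_smul,
        QuaternionAlgebra.imJ_smul, QuaternionAlgebra.imK_smul, smul_eq_mul,
        e2, e3, e4]
    have hQ : 4*a ≤ Qint ((c:ℤ)*p) q r ((4 * r ^ 2 + 4 * (c:ℤ) * (p:ℤ)) / q) x y z := by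
      rcases eq_or_ne y 0 with rfl | hy
      · rw [Qint_y0 a b a' q r _ m11 m12 m21 m22 _ x z hBf]
        have hst : ¬(m22*x - m12*z = 0 ∧ -(m21*x) + m11*z = 0) := by
          rintro ⟨hs, ht⟩
          obtain ⟨hx0, hz0⟩ := mtx_zero m11 m12 m21 m22 x z hdet hs ht
          exact hnz ⟨hx0, rfl, hz0⟩
        have := redf_min a b a' _ _ ha hb1 hb2 haa' hst
        linarith
      · have := Qint_ylt a b a' q r _ ((c:ℤ)*p) m11 m12 m21 m22 ha hb1 hb2 haa'
          hdisc' ha4 hcp hqodd hdet hBf x y z hy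
        linarith
    exact conv_le γ a _ hv hQ
  · -- Part 2: first minimum attained
    refine ⟨_, ocqr_mem p c q r hq0 0 m11 0 m21, ?_⟩
    have hv := value_formula c p q r _ hq0 hqc' (⟨((0:ℤ):ℚ) + ((m11:ℤ):ℚ)/2, ((0:ℤ):ℚ)/2, ((m11:ℤ):ℚ)/2 + ((m21:ℤ):ℚ)*(r:ℚ)/(q:ℚ), ((0:ℤ):ℚ)/2 + ((m21:ℤ):ℚ)/(q:ℚ)⟩ : ℍ[ℚ, -((c : ℚ) * (p : ℚ)), -(q : ℚ)]) 0 m11 0 m21 rfl rfl rfl rfl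
    refine conv_eq _ a _ hv ?_
    rw [Qint_y0 a b a' q r _ m11 m12 m21 m22 _ m11 m21 hBf]
    simp only [fval]
    linear_combination (4*a*((m22*m11 - m12*m21)+1)) * hdet
  · -- Part 3
    intro γ₁ hγ₁ hv₁
    obtain ⟨w1, x1, y1, z1, e1, e2, e3, e4⟩ := ocqr_coords p c q r hγ₁
    have hv := value_formula c p q r _ hq0 hqc' γ₁ w1 x1 y1 z1 e1 e2 e3 e4
    have hQ1 : Qint ((c:ℤ)*p) q r ((4 * r ^ 2 + 4 * (c:ℤ) * (p:ℤ)) / q) x1 y1 z1 = 4*a := by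
      have h4 : 4*(4 * Nrd γ₁ - Trd γ₁ ^ 2) = ((4*a : ℤ):ℚ) := by
        rw [hv₁]; push_cast; ring
      have h5 := hv.symm.trans h4
      exact_mod_cast h5
    have hy1 : y1 = 0 := by
      by_contra hy
      have := Qint_ylt a b a' q r _ ((c:ℤ)*p) m11 m12 m21 m22 ha hb1 hb2 haa'
        hdisc' ha4 hcp hqodd hdet hBf x1 y1 z1 hy
      rw [hQ1] at this; linarith
    subst hy1
    have hQy0 := Qint_y0 a b a' q r ((4 * r ^ 2 + 4 * (c:ℤ) * (p:ℤ)) / q)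
      m11 m12 m21 m22 ((c:ℤ)*p) x1 z1 hBf
    have hf1 : fval a b a' (m22*x1 - m12*z1) (-(m21*x1) + m11*z1) = a := by
      rw [hQy0] at hQ1; linarith
    have hx1z1 : ¬(x1 = 0 ∧ z1 = 0) := by
      rintro ⟨rfl, rfl⟩
      simp [fval] at hf1
      omega
    constructor
    · -- second minimum lower bound
      intro γ hγ hli
      obtain ⟨w, x, y, z, f1, f2, f3, f4⟩ := ocqr_coords p c q r hγ
      have hv' := value_formula c p q r _ hq0 hqc' γ w x y z f1 f2 f3 f4
      rcases eq_or_ne y 0 with rfl | hy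
      · have hcross : x1 * z - x * z1 ≠ 0 := by
          intro hc0
          exact not_indep_of_cross_eq c p q hq0 r γ₁ γ x1 z1 x z
            (by rw [e2]; norm_num) e3 (by rw [e4]; norm_num)
            (by rw [f2]; norm_num) f3 (by rw [f4]; norm_num) hx1z1 hc0 hli
        refine conv_le γ a' _ hv' ?_
        rw [Qint_y0 a b a' q r _ m11 m12 m21 m22 _ x z hBf]
        have hstc : (m22*x - m12*z) * (-(m21*x1) + m11*z1)
            - (-(m21*x) + m11*z) * (m22*x1 - m12*z1) = x*z1 - z*x1 := by
          linear_combination (x*z1 - z*x1) * hdet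
        rcases eq_or_ne (-(m21*x) + m11*z) 0 with ht0 | ht0
        · rw [ht0] at hstc
          have hs0t1 : (m22*x - m12*z) * (-(m21*x1) + m11*z1) ≠ 0 := by
            intro h0
            rw [h0] at hstc
            exact hcross (by linear_combination hstc)
          have hs0 : m22*x - m12*z ≠ 0 := fun h => hs0t1 (by rw [h]; ring)
          have ht1 : -(m21*x1) + m11*z1 ≠ 0 := fun h => hs0t1 (by rw [h]; ring)
          have haeq : a' ≤ a := by
            have h6 := redf_min2 a b a' (m22*x1 - m12*z1) (-(m21*x1) + m11*z1) ha hb1 hb2 haa' ht1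
            rw [hf1] at h6
            exact h6
          have hs02 := one_le_sq' hs0
          simp only [fval]
          rw [ht0]
          nlinarith
        · have := redf_min2 a b a' (m22*x - m12*z) (-(m21*x) + m11*z) ha hb1 hb2 haa' ht0
          linarith
      · have := Qint_ylt a b a' q r _ ((c:ℤ)*p) m11 m12 m21 m22 ha hb1 hb2 haa'
          hdisc' ha4 hcp hqodd hdet hBf x y z hy
        exact conv_le γ a' _ hv' (by linarith)
    · -- second minimum attained
      rcases eq_or_ne (-(m21*x1) + m11*z1) 0 with ht1 | ht1
      · -- t1 = 0 : use (m12, m22)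
        have hs1 : m22*x1 - m12*z1 ≠ 0 := by
          intro h0
          rw [h0, ht1] at hf1
          simp [fval] at hf1
          omega
        refine ⟨_, ocqr_mem p c q r hq0 0 m12 0 m22, ?_, ?_⟩
        · refine indep_of_cross c p q hq0 r γ₁ _ x1 z1 m12 m22
            e3 (by rw [e4]; norm_num) rfl (by norm_num) ?_
          intro h0
          apply hs1
          linarith
        · have hv' := value_formula c p q r _ hq0 hqc' (⟨((0:ℤ):ℚ) + ((m12:ℤ):ℚ)/2, ((0:ℤ):ℚ)/2, ((m12:ℤ):ℚ)/2 + ((m22:ℤ):ℚ)*(r:ℚ)/(q:ℚ), ((0:ℤ):ℚ)/2 + ((m22:ℤ):ℚ)/(q:ℚ)⟩ : ℍ[ℚ, -((c : ℚ) * (p : ℚ)), -(q : ℚ)]) 0 m12 0 m22 rfl rfl rfl rfl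
          refine conv_eq _ a' _ hv' ?_
          rw [Qint_y0 a b a' q r _ m11 m12 m21 m22 _ m12 m22 hBf]
          simp only [fval]
          linear_combination (4*a'*((-(m21*m12) + m11*m22)+1)) * hdet
      · -- t1 ≠ 0 : a = a', use (m11, m21)
        have haeq : a = a' := by
          have h6 := redf_min2 a b a' (m22*x1 - m12*z1) (-(m21*x1) + m11*z1) ha hb1 hb2 haa' ht1
          rw [hf1] at h6
          omega
        refine ⟨_, ocqr_mem p c q r hq0 0 m11 0 m21, ?_, ?_⟩
        · refine indep_of_cross c p q hq0 r γ₁ _ x1 z1 m11 m21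
            e3 (by rw [e4]; norm_num) rfl (by norm_num) ?_
          intro h0
          apply ht1
          linarith
        · have hv' := value_formula c p q r _ hq0 hqc' (⟨((0:ℤ):ℚ) + ((m11:ℤ):ℚ)/2, ((0:ℤ):ℚ)/2, ((m11:ℤ):ℚ)/2 + ((m21:ℤ):ℚ)*(r:ℚ)/(q:ℚ), ((0:ℤ):ℚ)/2 + ((m21:ℤ):ℚ)/(q:ℚ)⟩ : ℍ[ℚ, -((c : ℚ) * (p : ℚ)), -(q : ℚ)]) 0 m11 0 m21 rfl rfl rfl rfl
          refine conv_eq _ a' _ hv' ?_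
          rw [Qint_y0 a b a' q r _ m11 m12 m21 m22 _ m11 m21 hBf]
          simp only [fval]
          rw [← haeq]
          linear_combination (4*a*((m22*m11 - m12*m21)+1)) * hdet
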